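/- Let n ≥ 1, k ≥ 1, d ≥ 0, and h, g ∈ S_n. The number of pairs consisting of a sequence (τ_1,…,τ_d) of transpositions in S_n together with a composition d = d_1 + ⋯ + d_k into k nonnegative parts, such that each of the k consecutive blocks of the sequence (the j-th block having length d_j) is strictly monotone and τ_d ⋯ τ_1 h = g, equals the number of ordered k-tuples (σ_1,…,σ_k) ∈ S_n^k with Σ_{i=1}^k ℓ*(σ_i) = d and σ_k ⋯ σ_1 h = g. -/

import Mathlib

/-- For a transposition `τ = (a b)` with `a < b`, the "second element" `b`,
realized as the largest point moved by `τ`. -/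
def bval {n : ℕ} (τ : Equiv.Perm (Fin n)) : ℕ :=
  τ.support.sup fun x => (x : ℕ)

/-- The colength `ℓ*(σ) = n − c(σ)`, where `c(σ)` is the number of cycles of `σ`
(fixed points counted as cycles of length 1). -/
noncomputable def colength {n : ℕ} (σ : Equiv.Perm (Fin n)) : ℕ :=
  n - (σ.cycleType.card + (n - σ.support.card))

open Equiv Equiv.Perm Finset List

variable {n : ℕ}

lemma Equiv.Perm.apply_inv_self (f : Perm (Fin n)) (x : Fin n) : f (f⁻¹ x) = x :=
  f.apply_symm_apply x

lemma cycleType_card_le (σ : Perm (Fin n)) : σ.cycleType.card ≤ σ.support.card := by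
  rw [← Equiv.Perm.sum_cycleType]
  have := Multiset.card_nsmul_le_sum (s := σ.cycleType) (a := 1)
    (fun x hx => le_trans (by norm_num) (Equiv.Perm.two_le_of_mem_cycleType hx))
  simpa using this

lemma colength_eq (σ : Perm (Fin n)) :
    colength σ = σ.support.card - σ.cycleType.card := by
  have h1 := cycleType_card_le σ
  have h2 : σ.support.card ≤ n := by
    simpa using Finset.card_le_univ σ.support
  unfold colength; omega

lemma cycleType_card_eq (σ : Perm (Fin n)) :
    σ.cycleType.card = σ.cycleFactorsFinset.card := by
  simp [Equiv.Perm.cycleType]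

lemma support_swap_mul_three (σ : Perm (Fin n)) (b : Fin n) (hb : σ b ≠ b)
    (h3 : σ (σ b) ≠ b) :
    (Equiv.swap b (σ b) * σ).support = σ.support.erase b := by
  ext x
  simp only [Equiv.Perm.mem_support, Finset.mem_erase, Equiv.Perm.mul_apply]
  rcases eq_or_ne x b with rfl | hxb
  · simp [Equiv.swap_apply_right, hb]
  · rcases eq_or_ne (σ x) b with hsx | hsx
    · rw [hsx, Equiv.swap_apply_left]
      constructor
      · intro _; exact ⟨hxb, fun hc => hxb hc.symm⟩
      · intro _ hc; exact h3 (by rw [hc, hsx])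
    · rcases eq_or_ne (σ x) (σ b) with hsx2 | hsx2
      · exact absurd (σ.injective hsx2) hxb
      · rw [Equiv.swap_apply_of_ne_of_ne hsx hsx2]
        exact ⟨fun hh => ⟨hxb, hh⟩, fun hh => hh.2⟩

lemma support_swap_mul_two (σ : Perm (Fin n)) (b : Fin n) (hb : σ b ≠ b)
    (h2 : σ (σ b) = b) :
    (Equiv.swap b (σ b) * σ).support = (σ.support.erase (σ b)).erase b := by
  ext x
  simp only [Equiv.Perm.mem_support, Finset.mem_erase, Equiv.Perm.mul_apply]
  rcases eq_or_ne x b with rfl | hxb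
  · simp [Equiv.swap_apply_right]
  · rcases eq_or_ne x (σ b) with rfl | hxa
    · rw [h2, Equiv.swap_apply_left]
      simp
    · rcases eq_or_ne (σ x) b with hsx | hsx
      · exact absurd (σ.injective (hsx.trans h2.symm)) hxa
      · rcases eq_or_ne (σ x) (σ b) with hsx2 | hsx2
        · exact absurd (σ.injective hsx2) hxb
        · rw [Equiv.swap_apply_of_ne_of_ne hsx hsx2]
          exact ⟨fun hh => ⟨hxb, hxa, hh⟩, fun hh => hh.2.2⟩

lemma card_factors_swap_mul_two (σ : Perm (Fin n)) (b : Fin n) (hb : σ b ≠ b)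
    (h2 : σ (σ b) = b) :
    (Equiv.swap b (σ b) * σ).cycleFactorsFinset.card + 1 = σ.cycleFactorsFinset.card := by
  set τ : Perm (Fin n) := Equiv.swap b (σ b) with hτ
  have hτmem : τ ∈ σ.cycleFactorsFinset := by
    rw [Equiv.Perm.mem_cycleFactorsFinset_iff]
    refine ⟨Equiv.Perm.isCycle_swap (Ne.symm hb), fun a ha => ?_⟩
    rw [hτ, Equiv.Perm.support_swap (Ne.symm hb)] at ha
    simp only [Finset.mem_insert, Finset.mem_singleton] at ha
    rcases ha with rfl | rfl
    · simp [hτ]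
    · simp [hτ, h2]
  have hcomm : Commute τ σ := Equiv.Perm.self_mem_cycle_factors_commute hτmem
  have hkey : τ * σ = σ * τ⁻¹ := by
    rw [hcomm.eq, hτ, Equiv.swap_inv]
  rw [hkey, Equiv.Perm.cycleFactorsFinset_mul_inv_mem_eq_sdiff hτmem,
    Finset.sdiff_singleton_eq_erase, Finset.card_erase_of_mem hτmem]
  have : 1 ≤ σ.cycleFactorsFinset.card := Finset.card_pos.mpr ⟨τ, hτmem⟩
  omega

lemma card_factors_swap_mul_three (σ : Perm (Fin n)) (b : Fin n) (hb : σ b ≠ b)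
    (h3 : σ (σ b) ≠ b) :
    (Equiv.swap b (σ b) * σ).cycleFactorsFinset.card = σ.cycleFactorsFinset.card := by
  set C : Perm (Fin n) := σ.cycleOf b with hC
  have hbsupp : b ∈ σ.support := Equiv.Perm.mem_support.mpr hb
  have hCmem : C ∈ σ.cycleFactorsFinset :=
    Equiv.Perm.cycleOf_mem_cycleFactorsFinset_iff.mpr hbsupp
  have hCcyc : C.IsCycle := Equiv.Perm.isCycle_cycleOf σ hb
  have hCb : C b = σ b := Equiv.Perm.cycleOf_apply_self σ b
  have hCa : C (σ b) = σ (σ b) := by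
    rw [hC, Equiv.Perm.cycleOf_apply, if_pos]
    exact Equiv.Perm.SameCycle.apply_right (Equiv.Perm.SameCycle.refl σ b)
  set D : Perm (Fin n) := Equiv.swap b (σ b) * C with hD
  have hDcyc : D.IsCycle := by
    have := hCcyc.swap_mul (x := b) (by rw [hCb]; exact hb) (by rw [hCb, hCa]; exact h3)
    rwa [hCb] at this
  set R : Perm (Fin n) := σ * C⁻¹ with hR
  have hfacR : R.cycleFactorsFinset = σ.cycleFactorsFinset \ {C} :=
    Equiv.Perm.cycleFactorsFinset_mul_inv_mem_eq_sdiff hCmem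
  have hCσ : ∀ x ∈ C.support, C x = σ x :=
    (Equiv.Perm.mem_cycleFactorsFinset_iff.mp hCmem).2
  have hRfix : ∀ x ∈ C.support, R x = x := by
    intro x hx
    have hx' : C⁻¹ x ∈ C.support := by
      rw [Equiv.Perm.mem_support] at hx ⊢
      rw [Equiv.Perm.apply_inv_self]
      intro hc; exact hx (by rw [hc, Equiv.Perm.apply_inv_self, ← hc])
    rw [hR]
    simp only [Equiv.Perm.mul_apply]
    rw [← hCσ _ hx', Equiv.Perm.apply_inv_self]
  have hbC : b ∈ C.support := by rw [Equiv.Perm.mem_support, hCb]; exact hb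
  have haC : σ b ∈ C.support := by
    rw [Equiv.Perm.mem_support, hCa]
    intro hcc; exact hb (σ.injective hcc)
  have hsuppD : D.support ⊆ C.support := by
    intro x hx
    have := Equiv.Perm.support_mul_le (Equiv.swap b (σ b)) C hx
    rcases Finset.mem_union.mp this with hx1 | hx1
    · rw [Equiv.Perm.support_swap (Ne.symm hb)] at hx1
      simp only [Finset.mem_insert, Finset.mem_singleton] at hx1
      rcases hx1 with rfl | rfl
      · exact hbC
      · exact haC
    · exact hx1
  have hDR : D.Disjoint R := by
    intro x
    by_cases hx : x ∈ C.support
    · exact Or.inr (hRfix x hx)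
    · have : x ∉ D.support := fun hc => hx (hsuppD hc)
      exact Or.inl (Equiv.Perm.notMem_support.mp this)
  have hcommC : Commute C σ := Equiv.Perm.self_mem_cycle_factors_commute hCmem
  have hσ' : Equiv.swap b (σ b) * σ = D * R := by
    rw [hD, hR, mul_assoc, ← mul_assoc C σ C⁻¹, hcommC.eq, mul_inv_cancel_right]
  have hDmem : D ∈ (Equiv.swap b (σ b) * σ).cycleFactorsFinset := by
    rw [Equiv.Perm.mem_cycleFactorsFinset_iff]
    refine ⟨hDcyc, fun x hx => ?_⟩
    have hx' : R x = x := hRfix x (hsuppD hx)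
    calc D x = D (R x) := by rw [hx']
      _ = (D * R) x := rfl
      _ = (Equiv.swap b (σ b) * σ) x := by rw [hσ']
  have hcommDR : Commute D R := hDR.commute
  have hrest : (Equiv.swap b (σ b) * σ) * D⁻¹ = R := by
    rw [hσ', hcommDR.eq, mul_inv_cancel_right]
  have hkey := Equiv.Perm.cycleFactorsFinset_mul_inv_mem_eq_sdiff hDmem
  rw [hrest, hfacR] at hkey
  have h1 : ((Equiv.swap b (σ b) * σ).cycleFactorsFinset \ {D}).card
      = (Equiv.swap b (σ b) * σ).cycleFactorsFinset.card - 1 := by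
    rw [Finset.sdiff_singleton_eq_erase, Finset.card_erase_of_mem hDmem]
  have h2 : (σ.cycleFactorsFinset \ {C}).card = σ.cycleFactorsFinset.card - 1 := by
    rw [Finset.sdiff_singleton_eq_erase, Finset.card_erase_of_mem hCmem]
  have hp1 : 1 ≤ (Equiv.swap b (σ b) * σ).cycleFactorsFinset.card :=
    Finset.card_pos.mpr ⟨D, hDmem⟩
  have hp2 : 1 ≤ σ.cycleFactorsFinset.card := Finset.card_pos.mpr ⟨C, hCmem⟩
  have h3 := congrArg Finset.card hkey
  omega

lemma colength_swap_mul (σ : Perm (Fin n)) (b : Fin n) (hbs : b ∈ σ.support) :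
    colength (Equiv.swap b (σ b) * σ) + 1 = colength σ := by
  have hb : σ b ≠ b := Equiv.Perm.mem_support.mp hbs
  have hba : σ b ∈ σ.support := by
    rw [Equiv.Perm.mem_support]; intro hc; exact hb (σ.injective hc)
  rw [colength_eq, colength_eq, cycleType_card_eq, cycleType_card_eq]
  have hle' := cycleType_card_le (Equiv.swap b (σ b) * σ)
  rw [cycleType_card_eq] at hle'
  have hle := cycleType_card_le σ
  rw [cycleType_card_eq] at hle
  rcases eq_or_ne (σ (σ b)) b with h2 | h3
  · have hs := support_swap_mul_two σ b hb h2
    have hc := card_factors_swap_mul_two σ b hb h2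
    have hmem1 : b ∈ σ.support.erase (σ b) :=
      Finset.mem_erase.mpr ⟨fun hc' => hb hc'.symm, hbs⟩
    have e1 : (σ.support.erase (σ b)).card + 1 = σ.support.card :=
      Finset.card_erase_add_one hba
    have e2 : ((σ.support.erase (σ b)).erase b).card + 1 = (σ.support.erase (σ b)).card :=
      Finset.card_erase_add_one hmem1
    have e0 : (Equiv.swap b (σ b) * σ).support.card
        = ((σ.support.erase (σ b)).erase b).card := by rw [hs]
    omega
  · have hs := support_swap_mul_three σ b hb h3
    have hc := card_factors_swap_mul_three σ b hb h3
    have e1 : (σ.support.erase b).card + 1 = σ.support.card :=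
      Finset.card_erase_add_one hbs
    have e0 : (Equiv.swap b (σ b) * σ).support.card = (σ.support.erase b).card := by
      rw [hs]
    omega


/-- a strictly monotone list of transpositions -/
def smono {n : ℕ} (L : List (Equiv.Perm (Fin n))) : Prop :=
  (∀ τ ∈ L, τ.IsSwap) ∧ L.Chain' (fun a b => bval a < bval b)

lemma bval_swap {a b : Fin n} (hab : a < b) : bval (Equiv.swap a b) = (b : ℕ) := by
  rw [bval, Equiv.Perm.support_swap (ne_of_lt hab)]
  rw [Finset.sup_insert, Finset.sup_singleton]
  exact max_eq_right (le_of_lt hab)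

lemma le_bval {τ : Perm (Fin n)} {x : Fin n} (hx : x ∈ τ.support) : (x : ℕ) ≤ bval τ :=
  Finset.le_sup hx

/-- support of a product of a list is contained in union of supports -/
lemma mem_support_prod {L : List (Perm (Fin n))} {x : Fin n}
    (hx : x ∈ L.prod.support) : ∃ τ ∈ L, x ∈ τ.support := by
  induction L with
  | nil => simp at hx
  | cons τ L ih =>
    rw [List.prod_cons] at hx
    have := Equiv.Perm.support_mul_le τ L.prod hx
    rcases Finset.mem_union.mp this with h | h
    · exact ⟨τ, List.mem_cons_self, h⟩
    · obtain ⟨τ', hτ', hx'⟩ := ih h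
      exact ⟨τ', List.mem_cons_of_mem _ hτ', hx'⟩

lemma smono_of_append_left {L M : List (Perm (Fin n))} (h : smono (L ++ M)) : smono L :=
  ⟨fun τ hτ => h.1 τ (List.mem_append_left _ hτ), (List.isChain_append.mp h.2).1⟩

/-- key structure of a nonempty smono list: its product moves `b` (the largest bval),
sends `b` to `a`, and fixes everything above `b`. -/
lemma smono_snoc_spec {L : List (Perm (Fin n))} {a b : Fin n} (hab : a < b)
    (hs : smono (L ++ [Equiv.swap a b])) :
    ((L ++ [Equiv.swap a b]).reverse.prod) b = a ∧
      (∀ x : Fin n, (b : ℕ) < (x : ℕ) →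
        ((L ++ [Equiv.swap a b]).reverse.prod) x = x) := by
  have hlt : ∀ τ ∈ L, bval τ < (b : ℕ) := by
    intro τ hτ
    have hc := hs.2
    rw [List.Chain', List.isChain_append] at hc
    obtain ⟨hc1, -, hc3⟩ := hc
    -- all elements of L are ≤ last, and last < bval (swap a b) = b
    haveI : IsTrans (Equiv.Perm (Fin n)) (fun u v => bval u < bval v) :=
      ⟨fun _ _ _ => lt_trans⟩
    rcases (List.isChain_iff_pairwise (R := fun u v : Perm (Fin n) => bval u < bval v)).mp
      hs.2 with hp
    have := List.pairwise_append.mp hp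
    have h4 := this.2.2 τ hτ (Equiv.swap a b) (List.mem_singleton_self _)
    rwa [bval_swap hab] at h4
  have hfixL : ∀ x : Fin n, (b : ℕ) ≤ (x : ℕ) → (L.reverse.prod) x = x := by
    intro x hx
    by_contra hne
    have hxs : x ∈ L.reverse.prod.support := Equiv.Perm.mem_support.mpr hne
    obtain ⟨τ, hτ, hxτ⟩ := mem_support_prod hxs
    rw [List.mem_reverse] at hτ
    have := le_bval hxτ
    have := hlt τ hτ
    omega
  have hprod : (L ++ [Equiv.swap a b]).reverse.prod
      = Equiv.swap a b * L.reverse.prod := by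
    rw [List.reverse_append, List.prod_append]
    simp
  constructor
  · rw [hprod, Equiv.Perm.mul_apply, hfixL b le_rfl, Equiv.swap_apply_right]
  · intro x hx
    rw [hprod, Equiv.Perm.mul_apply, hfixL x (le_of_lt hx)]
    apply Equiv.swap_apply_of_ne_of_ne
    · intro hc; subst hc; have := hab.trans (Fin.lt_def.mpr hx); omega
    · intro hc; subst hc; omega

lemma isSwap_repr {τ : Perm (Fin n)} (h : τ.IsSwap) :
    ∃ a b, a < b ∧ τ = Equiv.swap a b := by
  obtain ⟨x, y, hxy, rfl⟩ := h
  rcases lt_or_gt_of_ne hxy with h | h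
  · exact ⟨x, y, h, rfl⟩
  · exact ⟨y, x, h, Equiv.swap_comm x y⟩

lemma smono_unique : ∀ (L L' : List (Perm (Fin n))), smono L → smono L' →
    L.reverse.prod = L'.reverse.prod → L = L' := by
  intro L
  induction L using List.reverseRecOn with
  | nil =>
    intro L' _ hs' hp
    induction L' using List.reverseRecOn with
    | nil => rfl
    | append_singleton M' τ' _ =>
      obtain ⟨a, b, hab, rfl⟩ := isSwap_repr (hs'.1 τ' (by simp))
      have hspec := smono_snoc_spec hab hs'
      exfalso
      rw [← hp] at hspec
      simp only [List.reverse_nil, List.prod_nil, Equiv.Perm.one_apply] at hspec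
      exact absurd hspec.1.symm (ne_of_lt hab)
  | append_singleton M τ ih =>
    intro L' hs hs' hp
    obtain ⟨a, b, hab, rfl⟩ := isSwap_repr (hs.1 τ (by simp))
    have hspec := smono_snoc_spec hab hs
    induction L' using List.reverseRecOn with
    | nil =>
      exfalso
      rw [hp] at hspec
      simp only [List.reverse_nil, List.prod_nil, Equiv.Perm.one_apply] at hspec
      exact absurd hspec.1.symm (ne_of_lt hab)
    | append_singleton M' τ' _ =>
      obtain ⟨a', b', hab', rfl⟩ := isSwap_repr (hs'.1 τ' (by simp))
      have hspec' := smono_snoc_spec hab' hs'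
      rw [← hp] at hspec'
      -- b = b'
      have hbb : b = b' := by
        rcases lt_trichotomy (b : ℕ) (b' : ℕ) with hlt | heq | hgt
        · exfalso
          have := hspec.2 b' hlt
          rw [this] at hspec'
          exact absurd hspec'.1.symm (ne_of_lt hab')
        · exact Fin.ext heq
        · exfalso
          have := hspec'.2 b hgt
          rw [this] at hspec
          exact absurd hspec.1.symm (ne_of_lt hab)
      subst hbb
      have haa : a = a' := hspec.1.symm.trans hspec'.1
      subst haa
      -- cancel the last transposition
      have hM : M.reverse.prod = M'.reverse.prod := by
        have h1 : (M ++ [Equiv.swap a b]).reverse.prod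
            = Equiv.swap a b * M.reverse.prod := by
          rw [List.reverse_append, List.prod_append]; simp
        have h2 : (M' ++ [Equiv.swap a b]).reverse.prod
            = Equiv.swap a b * M'.reverse.prod := by
          rw [List.reverse_append, List.prod_append]; simp
        rw [h1, h2] at hp
        exact mul_left_cancel hp
      have := ih M' (smono_of_append_left hs) (smono_of_append_left hs') hM
      rw [this]

lemma support_swap_mul_subset (σ : Perm (Fin n)) (b : Fin n) (hb : σ b ≠ b) :
    (Equiv.swap b (σ b) * σ).support ⊆ σ.support.erase b := by
  intro x hx
  rw [Equiv.Perm.mem_support, Equiv.Perm.mul_apply] at hx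
  rw [Finset.mem_erase, Equiv.Perm.mem_support]
  have hxb : x ≠ b := by
    rintro rfl; apply hx; rw [Equiv.swap_apply_right]
  refine ⟨hxb, fun hfix => ?_⟩
  rw [hfix] at hx
  apply hx
  apply Equiv.swap_apply_of_ne_of_ne hxb
  intro hc
  rw [hc] at hfix
  exact hxb (hc.trans (σ.injective hfix))

noncomputable def facto : Equiv.Perm (Fin n) → List (Equiv.Perm (Fin n)) := fun σ =>
  if h : σ = 1 then [] else
    have hne : σ.support.Nonempty := by
      rw [Finset.nonempty_iff_ne_empty, Ne, Equiv.Perm.support_eq_empty_iff]; exact h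
    have hdec : (Equiv.swap (σ.support.max' hne) (σ (σ.support.max' hne)) * σ).support.card
        < σ.support.card :=
      Equiv.Perm.card_support_swap_mul
        (Equiv.Perm.mem_support.mp (σ.support.max'_mem hne))
    facto (Equiv.swap (σ.support.max' hne) (σ (σ.support.max' hne)) * σ) ++
      [Equiv.swap (σ (σ.support.max' hne)) (σ.support.max' hne)]
termination_by σ => σ.support.card

lemma colength_one : colength (1 : Perm (Fin n)) = 0 := by
  rw [colength_eq]; simp

lemma facto_one : facto (1 : Perm (Fin n)) = [] := by
  rw [facto]; simp

lemma facto_spec : ∀ (N : ℕ) (σ : Perm (Fin n)), σ.support.card ≤ N →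
    smono (facto σ) ∧ (facto σ).reverse.prod = σ ∧
      (∀ τ ∈ facto σ, τ.support ⊆ σ.support) ∧ (facto σ).length = colength σ := by
  intro N
  induction N with
  | zero =>
    intro σ hσ
    have h1 : σ = 1 := by
      rw [← Equiv.Perm.support_eq_empty_iff]
      exact Finset.card_eq_zero.mp (Nat.le_zero.mp hσ)
    subst h1
    rw [facto_one]
    refine ⟨⟨by simp, List.isChain_nil⟩, by simp, by simp, ?_⟩
    rw [colength_one]; rfl
  | succ N ih =>
    intro σ hσ
    by_cases h1 : σ = 1
    · subst h1
      rw [facto_one]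
      refine ⟨⟨by simp, List.isChain_nil⟩, by simp, by simp, ?_⟩
      rw [colength_one]; rfl
    · have hne : σ.support.Nonempty := by
        rw [Finset.nonempty_iff_ne_empty, Ne, Equiv.Perm.support_eq_empty_iff]; exact h1
      set b : Fin n := σ.support.max' hne with hbdef
      have hbs : b ∈ σ.support := σ.support.max'_mem hne
      have hb : σ b ≠ b := Equiv.Perm.mem_support.mp hbs
      have hσbs : σ b ∈ σ.support := by
        rw [Equiv.Perm.mem_support]; intro hc; exact hb (σ.injective hc)
      have hlt : σ b < b :=
        lt_of_le_of_ne (σ.support.le_max' _ hσbs) hb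
      set σ' : Perm (Fin n) := Equiv.swap b (σ b) * σ with hσ'def
      have hsub : σ'.support ⊆ σ.support.erase b := support_swap_mul_subset σ b hb
      have hcard : σ'.support.card < σ.support.card :=
        Equiv.Perm.card_support_swap_mul hb
      obtain ⟨hsm', hpr', hsupp', hlen'⟩ := ih σ' (by omega)
      have hunfold : facto σ = facto σ' ++ [Equiv.swap (σ b) b] := by
        rw [facto]
        rw [dif_neg h1]
      have hmemlt : ∀ τ ∈ facto σ', bval τ < (b : ℕ) := by
        intro τ hτ
        obtain ⟨a', b', hab', rfl⟩ := isSwap_repr (hsm'.1 τ hτ)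
        rw [bval_swap hab']
        have hb's : b' ∈ (Equiv.swap a' b').support := by
          rw [Equiv.Perm.support_swap (ne_of_lt hab')]; simp
        have := hsupp' _ hτ hb's
        have hmem := hsub this
        rw [Finset.mem_erase] at hmem
        have := σ.support.le_max' _ hmem.2
        have hne' : (b' : ℕ) ≠ (b : ℕ) := fun hc => hmem.1 (Fin.ext hc)
        rw [← hbdef] at this
        omega
      refine ⟨⟨?_, ?_⟩, ?_, ?_, ?_⟩
      · -- all swaps
        intro τ hτ
        rw [hunfold, List.mem_append] at hτ
        rcases hτ with hτ | hτ
        · exact hsm'.1 τ hτ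
        · rw [List.mem_singleton] at hτ
          subst hτ
          exact ⟨σ b, b, ne_of_lt hlt, rfl⟩
      · -- chain
        rw [hunfold]
        rw [List.Chain', List.isChain_append]
        refine ⟨hsm'.2, List.isChain_singleton _, fun x hx y hy => ?_⟩
        have hxm : x ∈ facto σ' := List.mem_of_mem_getLast? hx
        rw [List.head?_cons, Option.mem_some_iff] at hy
        subst hy
        rw [bval_swap hlt]
        exact hmemlt x hxm
      · -- product
        rw [hunfold, List.reverse_append, List.prod_append]
        simp only [List.reverse_singleton, List.prod_cons, List.prod_nil, mul_one]
        rw [hpr']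
        rw [hσ'def, Equiv.swap_comm, ← mul_assoc, Equiv.swap_mul_self, one_mul]
      · -- support subset
        intro τ hτ
        rw [hunfold, List.mem_append] at hτ
        rcases hτ with hτ | hτ
        · exact (hsupp' τ hτ).trans (hsub.trans (Finset.erase_subset _ _))
        · rw [List.mem_singleton] at hτ
          subst hτ
          rw [Equiv.Perm.support_swap (ne_of_lt hlt)]
          intro x hxm
          simp only [Finset.mem_insert, Finset.mem_singleton] at hxm
          rcases hxm with rfl | rfl
          · exact hσbs
          · exact hbs
      · -- length
        rw [hunfold, List.length_append, List.length_singleton, hlen']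
        rw [hσ'def] at *
        exact colength_swap_mul σ b hbs

lemma facto_smono (σ : Perm (Fin n)) : smono (facto σ) :=
  (facto_spec σ.support.card σ le_rfl).1

lemma facto_prod (σ : Perm (Fin n)) : (facto σ).reverse.prod = σ :=
  (facto_spec σ.support.card σ le_rfl).2.1

lemma facto_length (σ : Perm (Fin n)) : (facto σ).length = colength σ :=
  (facto_spec σ.support.card σ le_rfl).2.2.2

lemma smono_facto_eq {L : List (Perm (Fin n))} (h : smono L) :
    facto (L.reverse.prod) = L :=
  smono_unique _ _ (facto_smono _) h (facto_prod _)

lemma smono_colength {L : List (Perm (Fin n))} (h : smono L) :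
    colength (L.reverse.prod) = L.length := by
  rw [← facto_length (L.reverse.prod), smono_facto_eq h]

/-! ### Splitting a list into blocks of prescribed lengths -/

def splitLens {α : Type*} : List ℕ → List α → List (List α)
  | [], _ => []
  | c :: cs, L => L.take c :: splitLens cs (L.drop c)

lemma splitLens_length {α : Type*} : ∀ (cs : List ℕ) (L : List α),
    (splitLens cs L).length = cs.length
  | [], _ => rfl
  | c :: cs, L => by simp [splitLens, splitLens_length cs]

lemma splitLens_flatten {α : Type*} : ∀ (cs : List ℕ) (L : List α), cs.sum = L.length →
    (splitLens cs L).flatten = L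
  | [], L, h => by
    simp only [List.sum_nil] at h
    simp only [splitLens, List.flatten_nil]
    exact (List.eq_nil_of_length_eq_zero h.symm).symm
  | c :: cs, L, h => by
    simp only [List.sum_cons] at h
    simp only [splitLens, List.flatten_cons]
    rw [splitLens_flatten cs (L.drop c) (by rw [List.length_drop]; omega)]
    exact List.take_append_drop c L

lemma splitLens_getElem {α : Type*} : ∀ (cs : List ℕ) (L : List α) (i : ℕ)
    (h : i < cs.length),
    (splitLens cs L)[i]'(by rw [splitLens_length]; exact h)
      = (L.drop ((cs.take i).sum)).take (cs[i]'h)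
  | c :: cs, L, 0, h => by simp [splitLens]
  | c :: cs, L, i + 1, h => by
    simp only [splitLens, List.getElem_cons_succ, List.take_succ_cons, List.sum_cons]
    rw [splitLens_getElem cs (L.drop c) i (by simpa using h), List.drop_drop]

lemma splitLens_map_length {α : Type*} : ∀ (Bs : List (List α)),
    splitLens (Bs.map List.length) Bs.flatten = Bs
  | [] => rfl
  | B :: Bs => by
    simp only [List.map_cons, splitLens, List.flatten_cons]
    rw [List.take_left, List.drop_left, splitLens_map_length Bs]

lemma revprod_flatten {G : Type*} [Monoid G] : ∀ (Bs : List (List G)),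
    Bs.flatten.reverse.prod = (Bs.map (fun B => B.reverse.prod)).reverse.prod
  | [] => rfl
  | B :: Bs => by
    simp only [List.flatten_cons, List.map_cons, List.reverse_cons, List.reverse_append,
      List.prod_append]
    rw [revprod_flatten Bs]
    simp

lemma partialSum_eq {k : ℕ} (c : Fin k → ℕ) (j : Fin k) :
    ∑ j' ∈ Finset.univ.filter (· < j), c j' = ((List.ofFn c).take (j : ℕ)).sum := by
  rw [List.sum_take_ofFn]
  apply Finset.sum_congr _ (fun _ _ => rfl)
  ext j'
  simp only [Finset.mem_filter, Finset.mem_univ, true_and, Fin.lt_def]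

lemma partialSum_add_le {k : ℕ} (c : Fin k → ℕ) (j : Fin k) :
    (∑ j' ∈ Finset.univ.filter (· < j), c j') + c j ≤ ∑ i, c i := by
  have hj : j ∉ Finset.univ.filter (· < j) := by simp
  have h1 : (∑ j' ∈ insert j (Finset.univ.filter (· < j)), c j')
      = c j + ∑ j' ∈ Finset.univ.filter (· < j), c j' := Finset.sum_insert hj
  have h2 : ∑ j' ∈ insert j (Finset.univ.filter (· < j)), c j' ≤ ∑ i, c i :=
    Finset.sum_le_sum_of_subset (Finset.subset_univ _)
  omega

lemma block_length {n k d : ℕ} (p : (Fin d → Equiv.Perm (Fin n)) × (Fin k → ℕ))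
    (hsum : (∑ j, p.2 j) = d) (j : Fin k) :
    (((List.ofFn p.1).drop (∑ j' ∈ Finset.univ.filter (· < j), p.2 j')).take
      (p.2 j)).length = p.2 j := by
  rw [List.length_take, List.length_drop, List.length_ofFn]
  have := partialSum_add_le p.2 j
  rw [hsum] at this
  omega

lemma block_getElem {n k d : ℕ} (p : (Fin d → Equiv.Perm (Fin n)) × (Fin k → ℕ))
    (hsum : (∑ j, p.2 j) = d) (j : Fin k) (i : ℕ) (hi : i < p.2 j) :
    ∀ (hb : i < (((List.ofFn p.1).drop
        (∑ j' ∈ Finset.univ.filter (· < j), p.2 j')).take (p.2 j)).length)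
      (hm : (∑ j' ∈ Finset.univ.filter (· < j), p.2 j') + i < d),
    (((List.ofFn p.1).drop (∑ j' ∈ Finset.univ.filter (· < j), p.2 j')).take
        (p.2 j))[i]'hb
      = p.1 ⟨(∑ j' ∈ Finset.univ.filter (· < j), p.2 j') + i, hm⟩ := by
  intro hb hm
  rw [List.getElem_take, List.getElem_drop, List.getElem_ofFn]

lemma block_smono {n k d : ℕ} (p : (Fin d → Equiv.Perm (Fin n)) × (Fin k → ℕ))
    (hsum : (∑ j, p.2 j) = d) (hswap : ∀ m, (p.1 m).IsSwap)
    (hmono : ∀ j : Fin k, ∀ m m' : Fin d,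
      (∑ j' ∈ Finset.univ.filter (· < j), p.2 j') ≤ (m : ℕ) →
      (m : ℕ) < (∑ j' ∈ Finset.univ.filter (· < j), p.2 j') + p.2 j →
      (∑ j' ∈ Finset.univ.filter (· < j), p.2 j') ≤ (m' : ℕ) →
      (m' : ℕ) < (∑ j' ∈ Finset.univ.filter (· < j), p.2 j') + p.2 j →
      m < m' → bval (p.1 m) < bval (p.1 m')) (j : Fin k) :
    smono (((List.ofFn p.1).drop (∑ j' ∈ Finset.univ.filter (· < j), p.2 j')).take
      (p.2 j)) := by
  have hSle : (∑ j' ∈ Finset.univ.filter (· < j), p.2 j') + p.2 j ≤ d := by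
    have := partialSum_add_le p.2 j
    rw [hsum] at this
    exact this
  have hlen := block_length p hsum j
  constructor
  · intro τ hτ
    have hmem : τ ∈ List.ofFn p.1 :=
      List.mem_of_mem_drop (List.mem_of_mem_take hτ)
    rw [List.mem_ofFn] at hmem
    obtain ⟨m, rfl⟩ := hmem
    exact hswap m
  · rw [List.Chain', List.isChain_iff_getElem]
    intro i hi
    rw [hlen] at hi
    have hi1 : i < p.2 j := by omega
    have hi2 : i + 1 < p.2 j := by omega
    have hm1 : (∑ j' ∈ Finset.univ.filter (· < j), p.2 j') + i < d := by omega
    have hm2 : (∑ j' ∈ Finset.univ.filter (· < j), p.2 j') + (i + 1) < d := by omega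
    rw [block_getElem p hsum j i hi1 (by rw [hlen]; omega) hm1,
      block_getElem p hsum j (i + 1) hi2 (by rw [hlen]; omega) hm2]
    apply hmono j
    · simp
    · simp; omega
    · simp
    · simp; omega
    · rw [Fin.lt_def]; simp

lemma block_eq_splitLens {n k d : ℕ} (p : (Fin d → Equiv.Perm (Fin n)) × (Fin k → ℕ))
    (j : Fin k) :
    ((List.ofFn p.1).drop (∑ j' ∈ Finset.univ.filter (· < j), p.2 j')).take (p.2 j)
      = (splitLens (List.ofFn p.2) (List.ofFn p.1))[(j : ℕ)]'
          (by rw [splitLens_length, List.length_ofFn]; exact j.isLt) := by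
  rw [splitLens_getElem (List.ofFn p.2) (List.ofFn p.1) (j : ℕ)
      (by rw [List.length_ofFn]; exact j.isLt),
    List.getElem_ofFn, ← partialSum_eq, Fin.eta]

lemma blocks_ofFn_eq {n k d : ℕ} (p : (Fin d → Equiv.Perm (Fin n)) × (Fin k → ℕ)) :
    (List.ofFn fun j : Fin k =>
        (((List.ofFn p.1).drop (∑ j' ∈ Finset.univ.filter (· < j), p.2 j')).take
          (p.2 j)).reverse.prod)
      = (splitLens (List.ofFn p.2) (List.ofFn p.1)).map (fun B => B.reverse.prod) := by
  apply List.ext_getElem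
  · rw [List.length_ofFn, List.length_map, splitLens_length, List.length_ofFn]
  · intro i h1 h2
    rw [List.getElem_ofFn, List.getElem_map]
    congr 1
    have hik : i < k := by rw [List.length_ofFn] at h1; exact h1
    have := block_eq_splitLens p ⟨i, hik⟩
    simpa using this

lemma blocks_revprod {n k d : ℕ} (p : (Fin d → Equiv.Perm (Fin n)) × (Fin k → ℕ))
    (hsum : (∑ j, p.2 j) = d) :
    (List.ofFn fun j : Fin k =>
        (((List.ofFn p.1).drop (∑ j' ∈ Finset.univ.filter (· < j), p.2 j')).take
          (p.2 j)).reverse.prod).reverse.prod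
      = (List.ofFn p.1).reverse.prod := by
  rw [blocks_ofFn_eq p, ← revprod_flatten,
    splitLens_flatten _ _ (by rw [List.sum_ofFn, List.length_ofFn, hsum])]

noncomputable def backFun {n k : ℕ} (σ : Fin k → Equiv.Perm (Fin n)) (d : ℕ) :
    (Fin d → Equiv.Perm (Fin n)) × (Fin k → ℕ) :=
  ⟨fun m => ((List.ofFn fun j => facto (σ j)).flatten).getD (m : ℕ) 1,
    fun j => colength (σ j)⟩

lemma backFun_flatten_length {n k d : ℕ} (σ : Fin k → Equiv.Perm (Fin n))
    (hcol : (∑ i, colength (σ i)) = d) :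
    (List.ofFn fun j => facto (σ j)).flatten.length = d := by
  rw [List.length_flatten, List.map_ofFn, List.sum_ofFn]
  simp only [Function.comp]
  rw [← hcol]
  exact Finset.sum_congr rfl fun j _ => facto_length (σ j)

lemma backFun_ofFn {n k d : ℕ} (σ : Fin k → Equiv.Perm (Fin n))
    (hcol : (∑ i, colength (σ i)) = d) :
    List.ofFn (backFun σ d).1 = (List.ofFn fun j => facto (σ j)).flatten := by
  apply List.ext_getElem
  · rw [List.length_ofFn, backFun_flatten_length σ hcol]
  · intro i h1 h2
    rw [List.getElem_ofFn]
    exact List.getD_eq_getElem _ _ h2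

lemma backFun_cs {n k d : ℕ} (σ : Fin k → Equiv.Perm (Fin n)) :
    List.ofFn (backFun σ d).2 = (List.ofFn fun j => facto (σ j)).map List.length := by
  rw [List.map_ofFn]
  congr 1
  funext j
  simp only [backFun, Function.comp]
  rw [facto_length]

lemma backFun_block_eq {n k d : ℕ} (σ : Fin k → Equiv.Perm (Fin n))
    (hcol : (∑ i, colength (σ i)) = d) (j : Fin k) :
    ((List.ofFn (backFun σ d).1).drop
        (∑ j' ∈ Finset.univ.filter (· < j), (backFun σ d).2 j')).take ((backFun σ d).2 j)
      = facto (σ j) := by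
  rw [block_eq_splitLens (backFun σ d) j]
  have : splitLens (List.ofFn (backFun σ d).2) (List.ofFn (backFun σ d).1)
      = List.ofFn fun j => facto (σ j) := by
    rw [backFun_cs, backFun_ofFn σ hcol, splitLens_map_length]
  simp only [this]
  rw [List.getElem_ofFn, Fin.eta]

lemma backward_mem {n k d : ℕ} (σ : Fin k → Equiv.Perm (Fin n))
    (hcol : (∑ i, colength (σ i)) = d) :
    (∑ j, (backFun σ d).2 j) = d ∧
    (∀ m, ((backFun σ d).1 m).IsSwap) ∧
    (∀ j : Fin k, ∀ m m' : Fin d,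
      (∑ j' ∈ Finset.univ.filter (· < j), (backFun σ d).2 j') ≤ (m : ℕ) →
      (m : ℕ) < (∑ j' ∈ Finset.univ.filter (· < j), (backFun σ d).2 j')
          + (backFun σ d).2 j →
      (∑ j' ∈ Finset.univ.filter (· < j), (backFun σ d).2 j') ≤ (m' : ℕ) →
      (m' : ℕ) < (∑ j' ∈ Finset.univ.filter (· < j), (backFun σ d).2 j')
          + (backFun σ d).2 j →
      m < m' → bval ((backFun σ d).1 m) < bval ((backFun σ d).1 m')) ∧
    (List.ofFn (backFun σ d).1).reverse.prod = (List.ofFn σ).reverse.prod := by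
  have hsum : (∑ j, (backFun σ d).2 j) = d := hcol
  refine ⟨hsum, ?_, ?_, ?_⟩
  · -- all swaps
    intro m
    have hmem : (backFun σ d).1 m ∈ List.ofFn (backFun σ d).1 := by
      rw [List.mem_ofFn]; exact ⟨m, rfl⟩
    rw [backFun_ofFn σ hcol, List.mem_flatten] at hmem
    obtain ⟨B, hB, hτB⟩ := hmem
    rw [List.mem_ofFn] at hB
    obtain ⟨j, rfl⟩ := hB
    exact (facto_smono (σ j)).1 _ hτB
  · -- monotone blocks
    intro j m m' h1 h2 h3 h4 hlt
    have hblock := backFun_block_eq σ hcol j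
    have hblen := block_length (backFun σ d) hsum j
    have hclen : (facto (σ j)).length = (backFun σ d).2 j := facto_length (σ j)
    set S := ∑ j' ∈ Finset.univ.filter (· < j), (backFun σ d).2 j' with hS
    have hi : (m : ℕ) - S < (backFun σ d).2 j := by omega
    have hi' : (m' : ℕ) - S < (backFun σ d).2 j := by omega
    have hgm : (facto (σ j))[(m : ℕ) - S]'(by omega) = (backFun σ d).1 m := by
      simp only [← hblock]
      rw [block_getElem (backFun σ d) hsum j _ hi (by rw [hblen]; exact hi)
        (by omega)]
      refine congrArg _ (Fin.ext ?_)
      show (∑ j' ∈ Finset.univ.filter (· < j), (backFun σ d).2 j') + ((m : ℕ) - S)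
          = (m : ℕ)
      rw [← hS]
      omega
    have hgm' : (facto (σ j))[(m' : ℕ) - S]'(by omega) = (backFun σ d).1 m' := by
      simp only [← hblock]
      rw [block_getElem (backFun σ d) hsum j _ hi' (by rw [hblen]; exact hi')
        (by omega)]
      refine congrArg _ (Fin.ext ?_)
      show (∑ j' ∈ Finset.univ.filter (· < j), (backFun σ d).2 j') + ((m' : ℕ) - S)
          = (m' : ℕ)
      rw [← hS]
      omega
    haveI : IsTrans (Equiv.Perm (Fin n)) (fun u v => bval u < bval v) :=
      ⟨fun _ _ _ => lt_trans⟩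
    have hpw := (List.isChain_iff_pairwise).mp (facto_smono (σ j)).2
    have := List.pairwise_iff_getElem.mp hpw ((m : ℕ) - S) ((m' : ℕ) - S)
      (by omega) (by omega) (by rw [Fin.lt_def] at hlt; omega)
    rwa [hgm, hgm'] at this
  · -- product
    rw [backFun_ofFn σ hcol, revprod_flatten, List.map_ofFn]
    have hh : ((fun B : List (Equiv.Perm (Fin n)) => B.reverse.prod)
        ∘ fun j => facto (σ j)) = σ := funext fun j => facto_prod (σ j)
    rw [hh]

/-- the number of pairs (a sequence of `d` transpositions, a composition
`d = d_1 + ⋯ + d_k`) such that each of the `k` consecutive blocks (the `j`-th of length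
`d_j`) is strictly monotone and `τ_d ⋯ τ_1 h = g`, equals the number of `k`-tuples
`(σ_1,…,σ_k)` with `Σ_i ℓ*(σ_i) = d` and `σ_k ⋯ σ_1 h = g`. -/
theorem multimonotone_path_count_eq_factorization_count (n k d : ℕ) (hn : 1 ≤ n)
    (hk : 1 ≤ k) (h g : Equiv.Perm (Fin n)) :
    Nat.card {p : (Fin d → Equiv.Perm (Fin n)) × (Fin k → ℕ) //
        (∑ j, p.2 j) = d ∧
        (∀ m, (p.1 m).IsSwap) ∧
        (∀ j : Fin k, ∀ m m' : Fin d,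
          (∑ j' ∈ Finset.univ.filter (· < j), p.2 j') ≤ (m : ℕ) →
          (m : ℕ) < (∑ j' ∈ Finset.univ.filter (· < j), p.2 j') + p.2 j →
          (∑ j' ∈ Finset.univ.filter (· < j), p.2 j') ≤ (m' : ℕ) →
          (m' : ℕ) < (∑ j' ∈ Finset.univ.filter (· < j), p.2 j') + p.2 j →
          m < m' → bval (p.1 m) < bval (p.1 m')) ∧
        (List.ofFn p.1).reverse.prod * h = g} =
      Nat.card {σ : Fin k → Equiv.Perm (Fin n) //
        (∑ i, colength (σ i)) = d ∧
        (List.ofFn σ).reverse.prod * h = g} := by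
  apply Nat.card_congr
  refine
    { toFun := fun x =>
        ⟨fun j => (((List.ofFn x.1.1).drop
            (∑ j' ∈ Finset.univ.filter (· < j), x.1.2 j')).take (x.1.2 j)).reverse.prod,
          ?_, ?_⟩
      invFun := fun y => ⟨backFun y.1 d, ?_, ?_, ?_, ?_⟩
      left_inv := ?_
      right_inv := ?_ }
  · -- sum of colengths
    obtain ⟨hsum, hswap, hmono, hprod⟩ := x.2
    have hc : ∀ j, colength ((((List.ofFn x.1.1).drop
        (∑ j' ∈ Finset.univ.filter (· < j), x.1.2 j')).take (x.1.2 j)).reverse.prod)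
        = x.1.2 j := fun j => by
      rw [smono_colength (block_smono x.1 hsum hswap hmono j), block_length x.1 hsum j]
    rw [Finset.sum_congr rfl fun j _ => hc j]
    exact hsum
  · -- product
    obtain ⟨hsum, hswap, hmono, hprod⟩ := x.2
    rw [blocks_revprod x.1 hsum]
    exact hprod
  · exact (backward_mem y.1 y.2.1).1
  · exact (backward_mem y.1 y.2.1).2.1
  · exact (backward_mem y.1 y.2.1).2.2.1
  · rw [(backward_mem y.1 y.2.1).2.2.2]
    exact y.2.2
  · -- left inverse
    intro x
    obtain ⟨p, hsum, hswap, hmono, hprod⟩ := x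
    apply Subtype.ext
    simp only []
    set σ : Fin k → Equiv.Perm (Fin n) := fun j => (((List.ofFn p.1).drop
        (∑ j' ∈ Finset.univ.filter (· < j), p.2 j')).take (p.2 j)).reverse.prod
      with hσdef
    have hc : ∀ j, colength (σ j) = p.2 j := fun j => by
      rw [hσdef, smono_colength (block_smono p hsum hswap hmono j),
        block_length p hsum j]
    have hcol : (∑ i, colength (σ i)) = d := by
      rw [Finset.sum_congr rfl fun j _ => hc j]
      exact hsum
    have hfacto : ∀ j, facto (σ j) = ((List.ofFn p.1).drop
        (∑ j' ∈ Finset.univ.filter (· < j), p.2 j')).take (p.2 j) := fun j =>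
      smono_facto_eq (block_smono p hsum hswap hmono j)
    have hofn : (List.ofFn fun j => facto (σ j))
        = splitLens (List.ofFn p.2) (List.ofFn p.1) := by
      apply List.ext_getElem
      · rw [List.length_ofFn, splitLens_length, List.length_ofFn]
      · intro i h1 h2
        have hik : i < k := by rw [List.length_ofFn] at h1; exact h1
        rw [List.getElem_ofFn, hfacto ⟨i, hik⟩, block_eq_splitLens p ⟨i, hik⟩]
    have hflat : (List.ofFn fun j => facto (σ j)).flatten = List.ofFn p.1 := by
      rw [hofn, splitLens_flatten]
      rw [List.sum_ofFn, List.length_ofFn, hsum]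
    refine Prod.ext ?_ ?_
    · funext m
      show ((List.ofFn fun j => facto (σ j)).flatten).getD (m : ℕ) 1 = p.1 m
      rw [hflat, List.getD_eq_getElem _ _ (by rw [List.length_ofFn]; exact m.isLt),
        List.getElem_ofFn, Fin.eta]
    · funext j
      exact hc j
  · -- right inverse
    intro y
    apply Subtype.ext
    funext j
    simp only []
    rw [backFun_block_eq y.1 y.2.1 j, facto_prod]
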